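/- For every g ∈ L²±(ℝ₊) and every t > 0, the twice-smoothed integral converges to the average of the one-sided limits: lim_{ε→0⁺} 2∫₀^t G_ε(t−s) g⁺(s,ε) ds = (g(t⁺) + g(t⁻))/2. -/

import Mathlib

open MeasureTheory Filter Set

/-- The exponential kernel `G_ε(τ) = (γ/(4ε))·exp(−γ|τ|/(2ε))`. -/
noncomputable def Gker (γ ε τ : ℝ) : ℝ := (γ / (4 * ε)) * Real.exp (-(γ * |τ|) / (2 * ε))


lemma expInt {a : ℝ} (ha : 0 < a) (r : ℝ) :
    IntegrableOn (fun v : ℝ => Real.exp (-(a * v))) (Ioi r) := by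
  simpa [neg_mul] using exp_neg_integrableOn_Ioi r ha

lemma expIntegral_Ioi {a : ℝ} (ha : 0 < a) (r : ℝ) :
    ∫ v in Ioi r, Real.exp (-(a * v)) = Real.exp (-(a * r)) / a := by
  have h := integral_comp_mul_left_Ioi (fun u : ℝ => Real.exp (-u)) r ha
  simp only [smul_eq_mul] at h
  rw [h, integral_exp_neg_Ioi]
  field_simp [mul_comm]

lemma map_shift_restrict (s : ℝ) :
    Measure.map (fun x : ℝ => s + x) (volume.restrict (Ioi (0:ℝ)))
      = volume.restrict (Ioi s) := by
  have h0 : Ioi (0:ℝ) = (fun x : ℝ => s + x) ⁻¹' (Ioi s) := by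
    ext x; simp
  rw [h0, ← Measure.restrict_map (measurable_const_add s) measurableSet_Ioi,
    Measure.IsAddLeftInvariant.map_add_left_eq_self s]

lemma integral_Ioi_shift (f : ℝ → ℂ) (s : ℝ) :
    (∫ τ in Ioi (0:ℝ), f (s + τ)) = ∫ w in Ioi s, f w := by
  have A : MeasurableEmbedding (fun x : ℝ => s + x) :=
    (Homeomorph.addLeft s).measurableEmbedding
  have h := A.setIntegral_map (μ := volume) f (Ioi s)
  rw [Measure.IsAddLeftInvariant.map_add_left_eq_self s] at h
  have hp : (fun x : ℝ => s + x) ⁻¹' (Ioi s) = Ioi (0:ℝ) := by ext x; simp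
  rw [hp] at h
  exact h.symm

lemma reflect_embedding (t : ℝ) : MeasurableEmbedding (fun x : ℝ => t - x) := by
  have : (fun x : ℝ => t - x) = (fun x : ℝ => t + x) ∘ (fun x : ℝ => -x) := by
    ext x; simp [sub_eq_add_neg]
  rw [this]
  exact (Homeomorph.addLeft t).measurableEmbedding.comp (Homeomorph.neg ℝ).measurableEmbedding

lemma map_reflect (t : ℝ) : Measure.map (fun x : ℝ => t - x) volume = volume := by
  have : (fun x : ℝ => t - x) = (fun x : ℝ => t + x) ∘ (fun x : ℝ => -x) := by
    ext x; simp [sub_eq_add_neg]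
  rw [this, ← Measure.map_map (measurable_const_add t) measurable_neg,
    Measure.map_neg_eq_self, Measure.IsAddLeftInvariant.map_add_left_eq_self t]

lemma integral_reflect (f : ℝ → ℂ) (t : ℝ) :
    (∫ w in Ioc (0:ℝ) t, f w) = ∫ v in Ico (0:ℝ) t, f (t - v) := by
  have A := reflect_embedding t
  have h := A.setIntegral_map (μ := volume) f (Ioc (0:ℝ) t)
  rw [map_reflect] at h
  have hp : (fun x : ℝ => t - x) ⁻¹' (Ioc (0:ℝ) t) = Ico (0:ℝ) t := by
    ext x
    simp only [mem_preimage, mem_Ioc, mem_Ico]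
    constructor <;> intro hx <;> constructor <;> linarith [hx.1, hx.2]
  rw [hp] at h
  exact h

lemma norm_setIntegral_exp_le {h : ℝ → ℂ} {S : Set ℝ} {r : ℝ} (hS : MeasurableSet S)
    (hSr : S ⊆ Ici r)
    {C : ℝ} (hC : ∀ v ∈ S, ‖h v‖ ≤ C) (hCn : 0 ≤ C) {a : ℝ} (ha : 0 < a) :
    ‖∫ v in S, h v * (Real.exp (-(a * v)) : ℂ)‖ ≤ C * Real.exp (-(a * r)) / a := by
  have hIci : IntegrableOn (fun v : ℝ => C * Real.exp (-(a * v))) (Ici r) := by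
    rw [integrableOn_Ici_iff_integrableOn_Ioi]
    exact (expInt ha r).const_mul C
  have hS' : IntegrableOn (fun v : ℝ => C * Real.exp (-(a * v))) S := hIci.mono_set hSr
  have step1 : ‖∫ v in S, h v * (Real.exp (-(a * v)) : ℂ)‖
      ≤ ∫ v in S, ‖h v * (Real.exp (-(a * v)) : ℂ)‖ := norm_integral_le_integral_norm _
  have step2 : (∫ v in S, ‖h v * (Real.exp (-(a * v)) : ℂ)‖)
      ≤ ∫ v in S, C * Real.exp (-(a * v)) := by
    apply integral_mono_of_nonneg (Eventually.of_forall fun v => norm_nonneg _) hS'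
    filter_upwards [ae_restrict_mem hS] with v hv
    have : ‖h v * (Real.exp (-(a * v)) : ℂ)‖ = ‖h v‖ * Real.exp (-(a * v)) := by
      rw [norm_mul, Complex.norm_real, Real.norm_eq_abs, abs_of_pos (Real.exp_pos _)]
    rw [this]
    exact mul_le_mul_of_nonneg_right (hC v hv) (Real.exp_pos _).le
  have step3 : (∫ v in S, C * Real.exp (-(a * v)))
      ≤ ∫ v in Ici r, C * Real.exp (-(a * v)) := by
    apply setIntegral_mono_set hIci
    · exact Eventually.of_forall fun v => by positivity
    · exact HasSubset.Subset.eventuallyLE hSr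
  have step4 : (∫ v in Ici r, C * Real.exp (-(a * v))) = C * Real.exp (-(a * r)) / a := by
    rw [integral_Ici_eq_integral_Ioi, integral_const_mul, expIntegral_Ioi ha, mul_div_assoc]
  linarith

lemma tendsto_zero_of_exp_bound {f : ℝ → ℂ} {M r : ℝ} (hr : 0 < r)
    (hf : ∀ᶠ a in atTop, ‖f a‖ ≤ M * Real.exp (-(a * r))) :
    Tendsto f atTop (nhds 0) := by
  apply squeeze_zero_norm' hf
  have h1 : Tendsto (fun a : ℝ => -(a * r)) atTop atBot := by
    apply tendsto_neg_atBot_iff.mpr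
    exact Tendsto.atTop_mul_const hr tendsto_id
  have := (Real.tendsto_exp_atBot.comp h1).const_mul M
  simpa using this

lemma integrableOn_bdd_mul {h : ℝ → ℂ} {φ : ℝ → ℝ} {S : Set ℝ} (hS : MeasurableSet S)
    (hm : AEStronglyMeasurable h (volume.restrict S)) {C : ℝ}
    (hb : ∀ v ∈ S, ‖h v‖ ≤ C) (hφc : Continuous φ) (hφ : IntegrableOn φ S) :
    IntegrableOn (fun v => h v * (φ v : ℂ)) S := by
  apply Integrable.mono' (hφ.abs.const_mul C)
  · exact hm.mul (Complex.continuous_ofReal.comp hφc).aestronglyMeasurable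
  · filter_upwards [ae_restrict_mem hS] with v hv
    rw [norm_mul, Complex.norm_real, Real.norm_eq_abs]
    exact mul_le_mul_of_nonneg_right (hb v hv) (abs_nonneg _)

lemma expIntegral_Ioo {a : ℝ} (ha : 0 < a) {r : ℝ} (hr : 0 < r) :
    ∫ v in Ioo (0:ℝ) r, Real.exp (-(a * v)) = (1 - Real.exp (-(a * r))) / a := by
  have hd : Disjoint (Ioo (0:ℝ) r) (Ici r) :=
    disjoint_left.mpr fun x hx hx' => absurd hx.2 (not_lt.mpr hx')
  have hu : Ioo (0:ℝ) r ∪ Ici r = Ioi 0 := Ioo_union_Ici_eq_Ioi hr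
  have hIci : IntegrableOn (fun v : ℝ => Real.exp (-(a * v))) (Ici r) := by
    rw [integrableOn_Ici_iff_integrableOn_Ioi]; exact expInt ha r
  have hIoo : IntegrableOn (fun v : ℝ => Real.exp (-(a * v))) (Ioo 0 r) :=
    (expInt ha 0).mono_set Ioo_subset_Ioi_self
  have hsplit := setIntegral_union hd measurableSet_Ici hIoo hIci
    (f := fun v : ℝ => Real.exp (-(a * v))) (μ := volume)
  rw [hu] at hsplit
  have h1 : ∫ v in Ioi (0:ℝ), Real.exp (-(a * v)) = 1 / a := by
    rw [expIntegral_Ioi ha]; simp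
  have h2 : ∫ v in Ici r, Real.exp (-(a * v)) = Real.exp (-(a * r)) / a := by
    rw [integral_Ici_eq_integral_Ioi, expIntegral_Ioi ha]
  rw [h1, h2] at hsplit
  field_simp at hsplit ⊢
  linarith

lemma complex_expInt {a : ℝ} (ha : 0 < a) (r : ℝ) :
    IntegrableOn (fun v : ℝ => (Real.exp (-(a * v)) : ℂ)) (Ioi r) :=
  (expInt ha r).ofReal

lemma approx_identity {h : ℝ → ℂ} {r : ℝ} (hr : 0 < r)
    (hm : AEStronglyMeasurable h (volume.restrict (Ioo 0 r)))
    {C : ℝ} (hC : ∀ v ∈ Ioo (0:ℝ) r, ‖h v‖ ≤ C)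
    {L : ℂ} (hL : Tendsto h (nhdsWithin 0 (Ioi 0)) (nhds L)) :
    Tendsto (fun a : ℝ => ((a/2 : ℝ) : ℂ) * ∫ v in Ioo (0:ℝ) r, h v * (Real.exp (-(a*v)) : ℂ))
      atTop (nhds (L/2)) := by
  have hCL : ∀ v ∈ Ioo (0:ℝ) r, ‖h v - L‖ ≤ C + ‖L‖ := fun v hv =>
    (norm_sub_le _ _).trans (add_le_add (hC v hv) le_rfl)
  have hCLn : 0 ≤ C + ‖L‖ := le_trans (norm_nonneg _) (hCL (r/2) ⟨by linarith, by linarith⟩)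
  -- integrability of (h - L) * exp for a > 0
  have hint : ∀ a : ℝ, 0 < a → IntegrableOn (fun v => (h v - L) * (Real.exp (-(a*v)) : ℂ))
      (Ioo (0:ℝ) r) := fun a ha => integrableOn_bdd_mul measurableSet_Ioo
    (hm.sub aestronglyMeasurable_const) hCL (by continuity)
    ((expInt ha 0).mono_set Ioo_subset_Ioi_self)
  have hintL : ∀ a : ℝ, 0 < a → IntegrableOn (fun v => L * (Real.exp (-(a*v)) : ℂ))
      (Ioo (0:ℝ) r) := fun a ha =>
    (((expInt ha 0).mono_set Ioo_subset_Ioi_self).ofReal.const_mul L :)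
  -- decomposition
  have hdecomp : ∀ a : ℝ, 0 < a →
      ((a/2 : ℝ) : ℂ) * ∫ v in Ioo (0:ℝ) r, h v * (Real.exp (-(a*v)) : ℂ)
      = ((a/2 : ℝ) : ℂ) * (∫ v in Ioo (0:ℝ) r, (h v - L) * (Real.exp (-(a*v)) : ℂ))
        + (L/2 - L * ((Real.exp (-(a*r)) : ℝ) : ℂ) / 2) := by
    intro a ha
    have hsum : (∫ v in Ioo (0:ℝ) r, h v * (Real.exp (-(a*v)) : ℂ))
        = (∫ v in Ioo (0:ℝ) r, (h v - L) * (Real.exp (-(a*v)) : ℂ))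
          + ∫ v in Ioo (0:ℝ) r, L * (Real.exp (-(a*v)) : ℂ) := by
      rw [← integral_add (hint a ha) (hintL a ha)]
      congr 1; ext v; ring
    have hexp : (∫ v in Ioo (0:ℝ) r, L * (Real.exp (-(a*v)) : ℂ))
        = L * (((1 - Real.exp (-(a * r))) / a : ℝ) : ℂ) := by
      rw [integral_const_mul]
      congr 1
      rw [← expIntegral_Ioo ha hr]
      exact integral_ofReal
    rw [hsum, hexp, mul_add]
    have hane : (a : ℂ) ≠ 0 := by exact_mod_cast ha.ne'
    push_cast
    field_simp
  -- the two tendsto pieces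
  have hmain : Tendsto (fun a : ℝ =>
      ((a/2 : ℝ) : ℂ) * ∫ v in Ioo (0:ℝ) r, (h v - L) * (Real.exp (-(a*v)) : ℂ))
      atTop (nhds 0) := by
    rw [NormedAddCommGroup.tendsto_nhds_zero]
    intro η hη
    obtain ⟨δ, hδpos, hδ⟩ := Metric.tendsto_nhdsWithin_nhds.mp hL (η/2) (by positivity)
    set δ' : ℝ := min δ r with hδ'def
    have hδ'pos : 0 < δ' := lt_min hδpos hr
    have hδ'r : δ' ≤ r := min_le_right _ _
    have hsmall : ∀ v ∈ Ioo (0:ℝ) δ', ‖h v - L‖ ≤ η/2 := by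
      intro v hv
      have := hδ (mem_Ioi.mpr hv.1) (by
        rw [Real.dist_eq, sub_zero, abs_of_pos hv.1]
        exact lt_of_lt_of_le hv.2 (min_le_left _ _))
      rw [dist_eq_norm] at this
      exact this.le
    have htail : Tendsto (fun a : ℝ => (C + ‖L‖) * Real.exp (-(a * δ')) / a * (a/2))
        atTop (nhds 0) := by
      have h1 : Tendsto (fun a : ℝ => -(a * δ')) atTop atBot :=
        tendsto_neg_atBot_iff.mpr (Tendsto.atTop_mul_const hδ'pos tendsto_id)
      have h2 := (Real.tendsto_exp_atBot.comp h1).const_mul ((C + ‖L‖)/2)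
      apply Tendsto.congr' _ (by simpa using h2)
      filter_upwards [eventually_gt_atTop (0:ℝ)] with a ha
      field_simp
    filter_upwards [eventually_gt_atTop (0:ℝ),
        htail.eventually_lt_const (show (0:ℝ) < η/4 by positivity)] with a ha htl
    have hd : Disjoint (Ioo (0:ℝ) δ') (Ico δ' r) :=
      disjoint_left.mpr fun x hx hx' => absurd hx.2 (not_lt.mpr hx'.1)
    have hu : Ioo (0:ℝ) δ' ∪ Ico δ' r = Ioo 0 r := Ioo_union_Ico_eq_Ioo hδ'pos hδ'r
    have hi1 : IntegrableOn (fun v => (h v - L) * (Real.exp (-(a*v)) : ℂ)) (Ioo 0 δ') :=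
      (hint a ha).mono_set (by rw [← hu]; exact subset_union_left)
    have hi2 : IntegrableOn (fun v => (h v - L) * (Real.exp (-(a*v)) : ℂ)) (Ico δ' r) :=
      (hint a ha).mono_set (by rw [← hu]; exact subset_union_right)
    have hsplit := setIntegral_union hd measurableSet_Ico hi1 hi2
      (f := fun v => (h v - L) * (Real.exp (-(a*v)) : ℂ)) (μ := volume)
    rw [hu] at hsplit
    have hb1 : ‖∫ v in Ioo (0:ℝ) δ', (h v - L) * (Real.exp (-(a*v)) : ℂ)‖
        ≤ (η/2) * Real.exp (-(a * 0)) / a :=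
      norm_setIntegral_exp_le measurableSet_Ioo
        (fun v hv => le_of_lt hv.1) hsmall (by positivity) ha
    have hb2 : ‖∫ v in Ico δ' r, (h v - L) * (Real.exp (-(a*v)) : ℂ)‖
        ≤ (C + ‖L‖) * Real.exp (-(a * δ')) / a :=
      norm_setIntegral_exp_le measurableSet_Ico (fun v hv => hv.1)
        (fun v hv => hCL v ⟨lt_of_lt_of_le hδ'pos hv.1, hv.2⟩) hCLn ha
    rw [hsplit]
    have hnorma : ‖((a/2 : ℝ) : ℂ)‖ = a/2 := by
      rw [Complex.norm_real, Real.norm_eq_abs, abs_of_pos (by linarith)]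
    calc ‖((a/2 : ℝ) : ℂ) * ((∫ v in Ioo (0:ℝ) δ', (h v - L) * (Real.exp (-(a*v)) : ℂ))
          + ∫ v in Ico δ' r, (h v - L) * (Real.exp (-(a*v)) : ℂ))‖
        ≤ (a/2) * ((η/2) * Real.exp (-(a * 0)) / a + (C + ‖L‖) * Real.exp (-(a * δ')) / a) := by
          rw [norm_mul, hnorma]
          exact mul_le_mul_of_nonneg_left ((norm_add_le _ _).trans (add_le_add hb1 hb2))
            (by linarith)
      _ = η/4 + (C + ‖L‖) * Real.exp (-(a * δ')) / a * (a/2) := by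
          rw [mul_zero, neg_zero, Real.exp_zero]
          field_simp
          ring
      _ < η/4 + η/4 := by linarith
      _ ≤ η := by linarith
  have htail2 : Tendsto (fun a : ℝ => L * ((Real.exp (-(a*r)) : ℝ) : ℂ) / 2)
      atTop (nhds 0) := by
    apply tendsto_zero_of_exp_bound hr (M := ‖L‖/2)
    filter_upwards with a
    rw [norm_div, norm_mul, Complex.norm_real, Real.norm_eq_abs,
      abs_of_pos (Real.exp_pos _)]
    simp [div_le_iff₀, mul_comm]
    ring_nf
    simp
  have hfinal := hmain.add
    ((tendsto_const_nhds : Tendsto (fun _ : ℝ => L/2) atTop (nhds (L/2))).sub htail2)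
  rw [zero_add, sub_zero] at hfinal
  refine Tendsto.congr' ?_ hfinal
  filter_upwards [eventually_gt_atTop (0:ℝ)] with a ha
  exact (hdecomp a ha).symm

lemma exp_interval_integral {c : ℝ} (hc : c ≠ 0) {m : ℝ} (hm : 0 ≤ m) :
    ∫ s in Ioc (0:ℝ) m, Real.exp (c * s) = (Real.exp (c * m) - 1) / c := by
  rw [← intervalIntegral.integral_of_le hm]
  have D : ∀ x : ℝ, HasDerivAt (fun y : ℝ => Real.exp (c * y) / c) (Real.exp (c * x)) x := by
    intro x
    rw [← mul_div_cancel_right₀ (Real.exp (c * x)) hc]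
    have := ((Real.hasDerivAt_exp (c*x)).comp x ((hasDerivAt_id x).const_mul c)).div_const c
    simpa [Function.comp, mul_one] using this
  rw [intervalIntegral.integral_eq_sub_of_hasDerivAt (fun x _ => D x)
    ((Real.continuous_exp.comp (continuous_const.mul continuous_id)).intervalIntegrable 0 m)]
  rw [mul_zero, Real.exp_zero]
  ring

lemma kernel_eq {a t w : ℝ} (ha : 0 < a) :
    a^2 * Real.exp (-(a*t)) * Real.exp (-(a*w)) * ((Real.exp (2*a*min t w) - 1)/(2*a))
      = a/2 * (Real.exp (-(a*|w - t|)) - Real.exp (-(a*(t+w)))) := by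
  have h1 : Real.exp (-(a*t)) * Real.exp (-(a*w)) * (Real.exp (2*a*min t w) - 1)
      = Real.exp (-(a*|w-t|)) - Real.exp (-(a*(t+w))) := by
    rw [mul_sub, mul_one, ← Real.exp_add, ← Real.exp_add]
    congr 2
    · rcases le_total w t with h | h
      · rw [min_eq_right h, abs_of_nonpos (sub_nonpos.mpr h)]; ring
      · rw [min_eq_left h, abs_of_nonneg (sub_nonneg.mpr h)]; ring
    · ring
  have hane : a ≠ 0 := ha.ne'
  calc a^2 * Real.exp (-(a*t)) * Real.exp (-(a*w)) * ((Real.exp (2*a*min t w) - 1)/(2*a))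
      = a/2 * (Real.exp (-(a*t)) * Real.exp (-(a*w)) * (Real.exp (2*a*min t w) - 1)) := by
        field_simp
    _ = a/2 * (Real.exp (-(a*|w-t|)) - Real.exp (-(a*(t+w)))) := by rw [h1]

noncomputable def auxF (g : ℝ → ℂ) (a : ℝ) : ℝ × ℝ → ℂ := fun p =>
  {q : ℝ × ℝ | q.1 < q.2}.indicator
    (fun q => ((Real.exp (2*a*q.1) : ℝ) : ℂ) * (g q.2 * ((Real.exp (-(a*q.2)) : ℝ) : ℂ))) p

lemma auxF_of_lt (g : ℝ → ℂ) (a : ℝ) {p : ℝ × ℝ} (h : p.1 < p.2) :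
    auxF g a p = ((Real.exp (2*a*p.1) : ℝ) : ℂ) * (g p.2 * ((Real.exp (-(a*p.2)) : ℝ) : ℂ)) :=
  indicator_of_mem (show p ∈ {q : ℝ × ℝ | q.1 < q.2} from h) _

lemma auxF_of_not_lt (g : ℝ → ℂ) (a : ℝ) {p : ℝ × ℝ} (h : ¬ p.1 < p.2) :
    auxF g a p = 0 :=
  indicator_of_notMem (show p ∉ {q : ℝ × ℝ | q.1 < q.2} from h) _

set_option maxHeartbeats 1000000 in
lemma key_identity (g : ℝ → ℂ) {C : ℝ} (hC : ∀ s, 0 ≤ s → ‖g s‖ ≤ C)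
    (hgm : AEStronglyMeasurable g (volume.restrict (Ioi (0:ℝ))))
    {t : ℝ} (ht : 0 < t) {a : ℝ} (ha : 0 < a) :
    (∫ s in Ioc (0:ℝ) t, ((a * Real.exp (-(a*(t - s))) : ℝ) : ℂ) *
        (∫ τ in Ioi (0:ℝ), g (s + τ) * ((a * Real.exp (-(a*τ)) : ℝ) : ℂ)))
      = ((a/2 : ℝ) : ℂ) * ∫ w in Ioi (0:ℝ),
          g w * ((Real.exp (-(a*|w - t|)) - Real.exp (-(a*(t+w))) : ℝ) : ℂ) := by
  have hCn : 0 ≤ C := le_trans (norm_nonneg _) (hC 0 le_rfl)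
  have hSlt : MeasurableSet {q : ℝ × ℝ | q.1 < q.2} :=
    (isOpen_lt continuous_fst continuous_snd).measurableSet
  -- Step 1: rewrite the outer integrand
  have hstep1 : (∫ s in Ioc (0:ℝ) t, ((a * Real.exp (-(a*(t - s))) : ℝ) : ℂ) *
        (∫ τ in Ioi (0:ℝ), g (s + τ) * ((a * Real.exp (-(a*τ)) : ℝ) : ℂ)))
      = ∫ s in Ioc (0:ℝ) t, ((a^2 * Real.exp (-(a*t)) : ℝ) : ℂ) *
          ∫ w in Ioi (0:ℝ), auxF g a (s, w) := by
    apply setIntegral_congr_fun measurableSet_Ioc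
    intro s hs
    dsimp only
    have hshift : (∫ τ in Ioi (0:ℝ), g (s + τ) * ((a * Real.exp (-(a*((s+τ) - s))) : ℝ) : ℂ))
        = ∫ w in Ioi s, g w * ((a * Real.exp (-(a*(w - s))) : ℝ) : ℂ) :=
      integral_Ioi_shift (fun w => g w * ((a * Real.exp (-(a*(w - s))) : ℝ) : ℂ)) s
    simp only [add_sub_cancel_left] at hshift
    rw [hshift]
    have hindic : (∫ w in Ioi s, g w * ((a * Real.exp (-(a*(w - s))) : ℝ) : ℂ))
        = ∫ w in Ioi (0:ℝ),
            (Ioi s).indicator (fun w => g w * ((a * Real.exp (-(a*(w - s))) : ℝ) : ℂ)) w := by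
      rw [setIntegral_indicator measurableSet_Ioi]
      congr 1
      rw [Ioi_inter_Ioi, max_eq_right hs.1.le]
    rw [hindic, ← integral_const_mul, ← integral_const_mul]
    apply setIntegral_congr_fun measurableSet_Ioi
    intro w _
    dsimp only
    by_cases hw : s < w
    · rw [indicator_of_mem (mem_Ioi.mpr hw), auxF_of_lt g a (p := (s,w)) hw]
      have harg : a * Real.exp (-(a*(t - s))) * (a * Real.exp (-(a*(w - s))))
          = a^2 * Real.exp (-(a*t)) * (Real.exp (2*a*s) * Real.exp (-(a*w))) := by
        calc a * Real.exp (-(a*(t - s))) * (a * Real.exp (-(a*(w - s))))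
            = a^2 * (Real.exp (-(a*(t-s))) * Real.exp (-(a*(w-s)))) := by ring
          _ = a^2 * Real.exp (-(a*(t-s)) + -(a*(w-s))) := by rw [Real.exp_add]
          _ = a^2 * Real.exp (-(a*t) + (2*a*s + -(a*w))) := by congr 1; ring
          _ = a^2 * Real.exp (-(a*t)) * (Real.exp (2*a*s) * Real.exp (-(a*w))) := by
              rw [Real.exp_add, Real.exp_add]; ring
      calc ((a * Real.exp (-(a*(t - s))) : ℝ) : ℂ) * (g w * ((a * Real.exp (-(a*(w-s))) : ℝ) : ℂ))
          = (((a * Real.exp (-(a*(t - s))) * (a * Real.exp (-(a*(w-s)))) : ℝ)) : ℂ) * g w := by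
            push_cast; ring
        _ = (((a^2 * Real.exp (-(a*t)) * (Real.exp (2*a*s) * Real.exp (-(a*w))) : ℝ)) : ℂ)
              * g w := by rw [harg]
        _ = ((a^2 * Real.exp (-(a*t)) : ℝ) : ℂ) * (((Real.exp (2*a*s) : ℝ) : ℂ)
              * (g w * ((Real.exp (-(a*w)) : ℝ) : ℂ))) := by push_cast; ring
    · rw [indicator_of_notMem (show w ∉ Ioi s by simpa using hw), auxF_of_not_lt g a (p := (s,w)) hw]
      simp
  rw [hstep1]
  rw [integral_const_mul]
  -- Step 2: Fubini
  have hmeq : (volume.restrict (Ioc (0:ℝ) t)).prod (volume.restrict (Ioi (0:ℝ)))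
      = (volume.prod volume).restrict ((Ioc (0:ℝ) t) ×ˢ (Ioi (0:ℝ))) :=
    Measure.prod_restrict _ _
  have hfin : IsFiniteMeasure (volume.restrict (Ioc (0:ℝ) t)) := by
    constructor
    rw [Measure.restrict_apply_univ, Real.volume_Ioc]
    exact ENNReal.ofReal_lt_top
  have hintF2 : Integrable (auxF g a) ((volume.restrict (Ioc (0:ℝ) t)).prod
      (volume.restrict (Ioi (0:ℝ)))) := by
    have haesm : AEStronglyMeasurable (auxF g a) ((volume.restrict (Ioc (0:ℝ) t)).prod
        (volume.restrict (Ioi (0:ℝ)))) := by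
      unfold auxF
      apply AEStronglyMeasurable.indicator _ hSlt
      apply AEStronglyMeasurable.mul
      · have c1 : Continuous fun q : ℝ × ℝ => ((Real.exp (2*a*q.1) : ℝ) : ℂ) := by continuity
        exact c1.aestronglyMeasurable
      · have c2 : Continuous fun w : ℝ => ((Real.exp (-(a*w)) : ℝ) : ℂ) := by continuity
        exact (hgm.mul c2.aestronglyMeasurable).comp_snd
    apply Integrable.mono' (g := fun p : ℝ × ℝ => (Real.exp (2*a*t) * C) * Real.exp (-(a*p.2)))
    · exact Integrable.mul_prod (integrable_const (μ := volume.restrict (Ioc (0:ℝ) t)) (Real.exp (2*a*t) * C)) (expInt ha 0)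
    · exact haesm
    · rw [hmeq]
      filter_upwards [ae_restrict_mem (measurableSet_Ioc.prod measurableSet_Ioi)] with p hp
      obtain ⟨hp1, hp2⟩ := hp
      by_cases hlt : p.1 < p.2
      · rw [auxF_of_lt g a hlt]
        rw [norm_mul, norm_mul, Complex.norm_real, Complex.norm_real, Real.norm_eq_abs,
          Real.norm_eq_abs, abs_of_pos (Real.exp_pos _), abs_of_pos (Real.exp_pos _)]
        have h1 : Real.exp (2*a*p.1) ≤ Real.exp (2*a*t) :=
          Real.exp_le_exp.mpr (by nlinarith [hp1.2, ha])
        have h2 : ‖g p.2‖ ≤ C := hC p.2 (le_of_lt hp2)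
        calc Real.exp (2*a*p.1) * (‖g p.2‖ * Real.exp (-(a*p.2)))
            ≤ Real.exp (2*a*t) * (C * Real.exp (-(a*p.2))) := by
              apply mul_le_mul h1 _ (by positivity) (Real.exp_pos _).le
              exact mul_le_mul_of_nonneg_right h2 (Real.exp_pos _).le
          _ = Real.exp (2*a*t) * C * Real.exp (-(a*p.2)) := by ring
      · rw [auxF_of_not_lt g a hlt]
        simp only [norm_zero]
        positivity
  have hswap : (∫ s in Ioc (0:ℝ) t, ∫ w in Ioi (0:ℝ), auxF g a (s, w))
      = ∫ w in Ioi (0:ℝ), ∫ s in Ioc (0:ℝ) t, auxF g a (s, w) :=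
    integral_integral_swap hintF2
  rw [hswap]
  -- Step 3: compute the inner integral in s
  have hinner : ∀ w ∈ Ioi (0:ℝ), (∫ s in Ioc (0:ℝ) t, auxF g a (s, w))
      = (((Real.exp (2*a*min t w) - 1)/(2*a) : ℝ) : ℂ)
          * (g w * ((Real.exp (-(a*w)) : ℝ) : ℂ)) := by
    intro w hw
    have hpt : ∀ s : ℝ, auxF g a (s, w) = (Iio w).indicator
        (fun s => ((Real.exp (2*a*s) : ℝ) : ℂ)) s * (g w * ((Real.exp (-(a*w)) : ℝ) : ℂ)) := by
      intro s
      by_cases hs : s < w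
      · rw [auxF_of_lt g a (p := (s,w)) hs, indicator_of_mem (mem_Iio.mpr hs)]
      · rw [auxF_of_not_lt g a (p := (s,w)) hs, indicator_of_notMem (by simpa using hs)]
        simp
    simp_rw [hpt]
    rw [integral_mul_const, setIntegral_indicator measurableSet_Iio]
    congr 1
    have hset : (Ioc (0:ℝ) t ∩ Iio w : Set ℝ) =ᵐ[volume] Ioc (0:ℝ) (min t w) := by
      rcases le_or_gt w t with h | h
      · have : Ioc (0:ℝ) t ∩ Iio w = Ioo (0:ℝ) w := by
          ext x
          simp only [mem_inter_iff, mem_Ioc, mem_Iio, mem_Ioo]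
          constructor
          · rintro ⟨⟨h1, _⟩, h3⟩; exact ⟨h1, h3⟩
          · rintro ⟨h1, h2⟩; exact ⟨⟨h1, le_trans h2.le h⟩, h2⟩
        rw [this, min_eq_right h]
        exact Ioo_ae_eq_Ioc
      · have : Ioc (0:ℝ) t ∩ Iio w = Ioc (0:ℝ) t := by
          apply inter_eq_left.mpr
          intro x hx
          exact mem_Iio.mpr (lt_of_le_of_lt hx.2 h)
        rw [this, min_eq_left h.le]
        exact EventuallyEq.rfl
    rw [setIntegral_congr_set hset]
    have hmin : 0 ≤ min t w := le_min ht.le (le_of_lt hw)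
    rw [show (∫ s in Ioc (0:ℝ) (min t w), ((Real.exp (2*a*s) : ℝ) : ℂ))
        = (((∫ s in Ioc (0:ℝ) (min t w), Real.exp (2*a*s)) : ℝ) : ℂ) from integral_ofReal]
    rw [exp_interval_integral (by positivity) hmin]
  rw [setIntegral_congr_fun measurableSet_Ioi hinner]
  -- Step 4: combine constants and apply the kernel identity
  rw [← integral_const_mul, ← integral_const_mul]
  apply setIntegral_congr_fun measurableSet_Ioi
  intro w _
  have hk := kernel_eq (a := a) (t := t) (w := w) ha
  calc ((a^2 * Real.exp (-(a*t)) : ℝ) : ℂ) * ((((Real.exp (2*a*min t w) - 1)/(2*a) : ℝ) : ℂ)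
        * (g w * ((Real.exp (-(a*w)) : ℝ) : ℂ)))
      = ((a^2 * Real.exp (-(a*t)) * Real.exp (-(a*w))
          * ((Real.exp (2*a*min t w) - 1)/(2*a)) : ℝ) : ℂ) * g w := by push_cast; ring
    _ = ((a/2 * (Real.exp (-(a*|w - t|)) - Real.exp (-(a*(t+w)))) : ℝ) : ℂ) * g w := by rw [hk]
    _ = ((a/2 : ℝ) : ℂ) * (g w * ((Real.exp (-(a*|w - t|)) - Real.exp (-(a*(t+w))) : ℝ) : ℂ)) := by
        push_cast; ring

lemma aesm_shift {g : ℝ → ℂ} (t : ℝ) (hg : AEStronglyMeasurable g (volume.restrict (Ioi t))) :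
    AEStronglyMeasurable (fun v => g (t + v)) (volume.restrict (Ioi (0:ℝ))) := by
  have hq : Measure.QuasiMeasurePreserving (fun v : ℝ => t + v)
      (volume.restrict (Ioi (0:ℝ))) (volume.restrict (Ioi t)) :=
    ⟨measurable_const_add t, by rw [map_shift_restrict t]⟩
  exact hg.comp_quasiMeasurePreserving hq

lemma aesm_reflect {g : ℝ → ℂ} {t : ℝ} (hg : AEStronglyMeasurable g (volume.restrict (Ioo 0 t))) :
    AEStronglyMeasurable (fun v => g (t - v)) (volume.restrict (Ioo (0:ℝ) t)) := by
  have hpre : (fun v : ℝ => t - v) ⁻¹' (Ioo (0:ℝ) t) = Ioo (0:ℝ) t := by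
    ext x
    simp only [mem_preimage, mem_Ioo]
    constructor <;> intro h <;> constructor <;> linarith [h.1, h.2]
  have hmap : Measure.map (fun v : ℝ => t - v) (volume.restrict (Ioo (0:ℝ) t))
      = volume.restrict (Ioo (0:ℝ) t) := by
    conv_lhs => rw [← hpre]
    rw [← Measure.restrict_map (reflect_embedding t).measurable measurableSet_Ioo, map_reflect]
  exact hg.comp_quasiMeasurePreserving ⟨(reflect_embedding t).measurable, by rw [hmap]⟩

set_option maxHeartbeats 1000000 in
lemma final_decomp (g : ℝ → ℂ) {C : ℝ} (hC : ∀ s, 0 ≤ s → ‖g s‖ ≤ C)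
    (hgm : AEStronglyMeasurable g (volume.restrict (Ioi (0:ℝ))))
    {t : ℝ} (ht : 0 < t) {a : ℝ} (ha : 0 < a) :
    (∫ w in Ioi (0:ℝ), g w * ((Real.exp (-(a*|w - t|)) - Real.exp (-(a*(t+w))) : ℝ) : ℂ))
      = (∫ v in Ioo (0:ℝ) t, g (t-v) * ((Real.exp (-(a*v)) : ℝ) : ℂ))
        + ((∫ v in Ioo (0:ℝ) t, g (t+v) * ((Real.exp (-(a*v)) : ℝ) : ℂ))
          + (∫ v in Ici t, g (t+v) * ((Real.exp (-(a*v)) : ℝ) : ℂ)))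
        - (∫ u in Ioi t, g (u-t) * ((Real.exp (-(a*u)) : ℝ) : ℂ)) := by
  have hCIoi : ∀ w ∈ Ioi (0:ℝ), ‖g w‖ ≤ C := fun w hw => hC w (le_of_lt hw)
  -- integrability of the two pieces
  have hphiX : IntegrableOn (fun w : ℝ => Real.exp (-(a*|w - t|))) (Ioi 0) := by
    apply Integrable.mono' ((expInt ha 0).const_mul (Real.exp (a*t)))
    · exact (Real.continuous_exp.comp (by continuity)).aestronglyMeasurable
    · apply Eventually.of_forall
      intro w
      rw [Real.norm_eq_abs, abs_of_pos (Real.exp_pos _), ← Real.exp_add]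
      apply Real.exp_le_exp.mpr
      have h1 : a*(w - t) ≤ a*|w - t| := mul_le_mul_of_nonneg_left (le_abs_self _) ha.le
      linarith
  have hphiY : IntegrableOn (fun w : ℝ => Real.exp (-(a*(t+w)))) (Ioi 0) := by
    have heq : (fun w : ℝ => Real.exp (-(a*(t+w))))
        = fun w => Real.exp (-(a*t)) * Real.exp (-(a*w)) := by
      funext w; rw [← Real.exp_add]; congr 1; ring
    rw [heq]
    exact (expInt ha 0).const_mul _
  have hX : IntegrableOn (fun w => g w * ((Real.exp (-(a*|w - t|)) : ℝ) : ℂ)) (Ioi 0) :=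
    integrableOn_bdd_mul measurableSet_Ioi hgm hCIoi (by continuity) hphiX
  have hY : IntegrableOn (fun w => g w * ((Real.exp (-(a*(t+w))) : ℝ) : ℂ)) (Ioi 0) :=
    integrableOn_bdd_mul measurableSet_Ioi hgm hCIoi (by continuity) hphiY
  have step1 : (∫ w in Ioi (0:ℝ), g w * ((Real.exp (-(a*|w - t|)) - Real.exp (-(a*(t+w))) : ℝ) : ℂ))
      = (∫ w in Ioi (0:ℝ), g w * ((Real.exp (-(a*|w - t|)) : ℝ) : ℂ))
        - ∫ w in Ioi (0:ℝ), g w * ((Real.exp (-(a*(t+w))) : ℝ) : ℂ) := by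
    rw [← integral_sub hX hY]
    apply setIntegral_congr_fun measurableSet_Ioi
    intro w _
    push_cast
    ring
  -- split the X integral
  have hdisj : Disjoint (Ioc (0:ℝ) t) (Ioi t) :=
    disjoint_left.mpr fun x hx hx' => (not_lt.mpr hx.2) hx'
  have hu : Ioc (0:ℝ) t ∪ Ioi t = Ioi 0 := Ioc_union_Ioi_eq_Ioi ht.le
  have hsplitX : (∫ w in Ioi (0:ℝ), g w * ((Real.exp (-(a*|w - t|)) : ℝ) : ℂ))
      = (∫ w in Ioc (0:ℝ) t, g w * ((Real.exp (-(a*|w - t|)) : ℝ) : ℂ))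
        + ∫ w in Ioi t, g w * ((Real.exp (-(a*|w - t|)) : ℝ) : ℂ) := by
    rw [← setIntegral_union hdisj measurableSet_Ioi
      (hX.mono_set (by rw [← hu]; exact subset_union_left))
      (hX.mono_set (by rw [← hu]; exact subset_union_right)), hu]
  -- the Ioc piece: reflection
  have hIoc : (∫ w in Ioc (0:ℝ) t, g w * ((Real.exp (-(a*|w - t|)) : ℝ) : ℂ))
      = ∫ v in Ioo (0:ℝ) t, g (t-v) * ((Real.exp (-(a*v)) : ℝ) : ℂ) := by
    have h1 : (∫ w in Ioc (0:ℝ) t, g w * ((Real.exp (-(a*|w - t|)) : ℝ) : ℂ))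
        = ∫ w in Ioc (0:ℝ) t, g w * ((Real.exp (-(a*(t - w))) : ℝ) : ℂ) := by
      apply setIntegral_congr_fun measurableSet_Ioc
      intro w hw
      dsimp only
      rw [abs_of_nonpos (by linarith [hw.2]), neg_sub]
    rw [h1, integral_reflect (fun w => g w * ((Real.exp (-(a*(t - w))) : ℝ) : ℂ)) t]
    simp only [sub_sub_cancel]
    exact (setIntegral_congr_set Ioo_ae_eq_Ico).symm
  -- the Ioi piece: shift
  have hIoi : (∫ w in Ioi t, g w * ((Real.exp (-(a*|w - t|)) : ℝ) : ℂ))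
      = (∫ v in Ioo (0:ℝ) t, g (t+v) * ((Real.exp (-(a*v)) : ℝ) : ℂ))
        + ∫ v in Ici t, g (t+v) * ((Real.exp (-(a*v)) : ℝ) : ℂ) := by
    have h1 : (∫ w in Ioi t, g w * ((Real.exp (-(a*|w - t|)) : ℝ) : ℂ))
        = ∫ w in Ioi t, g w * ((Real.exp (-(a*(w - t))) : ℝ) : ℂ) := by
      apply setIntegral_congr_fun measurableSet_Ioi
      intro w hw
      dsimp only
      rw [abs_of_nonneg (by linarith [mem_Ioi.mp hw])]
    rw [h1, ← integral_Ioi_shift (fun w => g w * ((Real.exp (-(a*(w - t))) : ℝ) : ℂ)) t]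
    simp only [add_sub_cancel_left]
    have hint : IntegrableOn (fun v => g (t+v) * ((Real.exp (-(a*v)) : ℝ) : ℂ)) (Ioi 0) := by
      apply integrableOn_bdd_mul measurableSet_Ioi
        (aesm_shift t (hgm.mono_measure (Measure.restrict_mono (Ioi_subset_Ioi ht.le) le_rfl)))
        (fun v hv => hC (t+v) (by linarith [mem_Ioi.mp hv])) (by continuity) (expInt ha 0)
    have hd2 : Disjoint (Ioo (0:ℝ) t) (Ici t) :=
      disjoint_left.mpr fun x hx hx' => absurd hx.2 (not_lt.mpr hx')
    have hu2 : Ioo (0:ℝ) t ∪ Ici t = Ioi 0 := Ioo_union_Ici_eq_Ioi ht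
    rw [← setIntegral_union hd2 measurableSet_Ici
      (hint.mono_set (by rw [← hu2]; exact subset_union_left))
      (hint.mono_set (by rw [← hu2]; exact subset_union_right)), hu2]
  -- the Y piece: shift
  have hYshift : (∫ w in Ioi (0:ℝ), g w * ((Real.exp (-(a*(t+w))) : ℝ) : ℂ))
      = ∫ u in Ioi t, g (u-t) * ((Real.exp (-(a*u)) : ℝ) : ℂ) := by
    rw [← integral_Ioi_shift (fun u => g (u-t) * ((Real.exp (-(a*u)) : ℝ) : ℂ)) t]
    simp only [add_sub_cancel_left]
  rw [step1, hsplitX, hIoc, hIoi, hYshift]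

lemma gker_eq {γ ε τ : ℝ} (hε : 0 < ε) (hτ : 0 ≤ τ) :
    Gker γ ε τ = ((γ/(2*ε))/2) * Real.exp (-((γ/(2*ε))*τ)) := by
  unfold Gker
  rw [abs_of_nonneg hτ]
  congr 1
  · rw [div_div]; congr 1; ring
  · rw [neg_div, div_mul_eq_mul_div]


set_option maxHeartbeats 1000000 in
/-- For `g ∈ L²±(ℝ₊)` and `t > 0`, the twice-smoothed integral
`2∫₀^t G_ε(t−s) g⁺(s,ε) ds`, where `g⁺(s,ε) = 2∫₀^∞ g(s+τ) G_ε(τ) dτ`, converges to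
`(g(t⁺) + g(t⁻))/2` as `ε → 0⁺`. -/
theorem twiceSmoothed_tendsto_average
    (γ : ℝ) (hγ : 0 < γ) (g : ℝ → ℂ)
    (hbdd : ∃ C : ℝ, ∀ s : ℝ, 0 ≤ s → ‖g s‖ ≤ C)
    (hL2 : MemLp g 2 (volume.restrict (Ioi (0 : ℝ))))
    (hright : ∀ s : ℝ, 0 ≤ s → ∃ L : ℂ, Tendsto g (nhdsWithin s (Ioi s)) (nhds L))
    (hleft : ∀ s : ℝ, 0 < s → ∃ L : ℂ, Tendsto g (nhdsWithin s (Iio s)) (nhds L))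
    (t : ℝ) (ht : 0 < t) (gp gm : ℂ)
    (hgp : Tendsto g (nhdsWithin t (Ioi t)) (nhds gp))
    (hgm : Tendsto g (nhdsWithin t (Iio t)) (nhds gm)) :
    Tendsto (fun ε : ℝ =>
        2 * ∫ s in (0 : ℝ)..t, (Gker γ ε (t - s) : ℂ) *
          (2 * ∫ τ in Ioi (0 : ℝ), g (s + τ) * (Gker γ ε τ : ℂ)))
      (nhdsWithin 0 (Ioi 0)) (nhds ((gp + gm) / 2)) := by
  obtain ⟨C, hC⟩ := hbdd
  have hCn : 0 ≤ C := le_trans (norm_nonneg _) (hC 0 le_rfl)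
  have hgmeas : AEStronglyMeasurable g (volume.restrict (Ioi (0:ℝ))) :=
    hL2.aestronglyMeasurable
  -- shifted/reflected limits
  have hTp : Tendsto (fun v : ℝ => g (t + v)) (nhdsWithin 0 (Ioi 0)) (nhds gp) := by
    apply hgp.comp
    apply tendsto_nhdsWithin_of_tendsto_nhds_of_eventually_within
    · have h0 : Tendsto (fun v : ℝ => t + v) (nhds 0) (nhds t) := by
        have hc : Continuous (fun v : ℝ => t + v) := by continuity
        have := hc.tendsto (0 : ℝ)
        simpa using this
      exact h0.mono_left nhdsWithin_le_nhds
    · filter_upwards [self_mem_nhdsWithin] with v hv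
      simpa using (mem_Ioi.mp hv)
  have hTm : Tendsto (fun v : ℝ => g (t - v)) (nhdsWithin 0 (Ioi 0)) (nhds gm) := by
    apply hgm.comp
    apply tendsto_nhdsWithin_of_tendsto_nhds_of_eventually_within
    · have h0 : Tendsto (fun v : ℝ => t - v) (nhds 0) (nhds t) := by
        have hc : Continuous (fun v : ℝ => t - v) := by continuity
        have := hc.tendsto (0 : ℝ)
        simpa using this
      exact h0.mono_left nhdsWithin_le_nhds
    · filter_upwards [self_mem_nhdsWithin] with v hv
      have : 0 < v := mem_Ioi.mp hv
      simp only [mem_Iio]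
      linarith
  -- the four limit pieces
  have tP1 : Tendsto (fun a : ℝ =>
      ((a/2 : ℝ) : ℂ) * ∫ v in Ioo (0:ℝ) t, g (t+v) * (Real.exp (-(a*v)) : ℂ))
      atTop (nhds (gp/2)) := by
    apply approx_identity ht
    · exact (aesm_shift t (hgmeas.mono_measure
        (Measure.restrict_mono (Ioi_subset_Ioi ht.le) le_rfl))).mono_measure
        (Measure.restrict_mono Ioo_subset_Ioi_self le_rfl)
    · exact fun v hv => hC (t+v) (by linarith [hv.1])
    · exact hTp
  have tP3 : Tendsto (fun a : ℝ =>
      ((a/2 : ℝ) : ℂ) * ∫ v in Ioo (0:ℝ) t, g (t-v) * (Real.exp (-(a*v)) : ℂ))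
      atTop (nhds (gm/2)) := by
    apply approx_identity ht
    · exact aesm_reflect (hgmeas.mono_measure
        (Measure.restrict_mono Ioo_subset_Ioi_self le_rfl))
    · exact fun v hv => hC (t-v) (by linarith [hv.2])
    · exact hTm
  have tP2 : Tendsto (fun a : ℝ =>
      ((a/2 : ℝ) : ℂ) * ∫ v in Ici t, g (t+v) * (Real.exp (-(a*v)) : ℂ))
      atTop (nhds 0) := by
    apply tendsto_zero_of_exp_bound ht (M := C/2)
    filter_upwards [eventually_gt_atTop (0:ℝ)] with a ha
    have hb := norm_setIntegral_exp_le (h := fun v => g (t+v)) (S := Ici t) (r := t)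
      measurableSet_Ici (subset_refl (Ici t)) (fun v hv => hC (t+v) (by linarith [mem_Ici.mp hv])) hCn ha
    rw [norm_mul, Complex.norm_real, Real.norm_eq_abs, abs_of_pos (by linarith)]
    calc (a/2) * ‖∫ v in Ici t, g (t+v) * (Real.exp (-(a*v)) : ℂ)‖
        ≤ (a/2) * (C * Real.exp (-(a*t)) / a) := by
          exact mul_le_mul_of_nonneg_left hb (by linarith)
      _ = C/2 * Real.exp (-(a*t)) := by field_simp
  have tP4 : Tendsto (fun a : ℝ =>
      ((a/2 : ℝ) : ℂ) * ∫ u in Ioi t, g (u-t) * (Real.exp (-(a*u)) : ℂ))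
      atTop (nhds 0) := by
    apply tendsto_zero_of_exp_bound ht (M := C/2)
    filter_upwards [eventually_gt_atTop (0:ℝ)] with a ha
    have hb := norm_setIntegral_exp_le (h := fun u => g (u-t)) (S := Ioi t) (r := t)
      measurableSet_Ioi (Ioi_subset_Ici_self) (fun u hu => hC (u-t) (by linarith [mem_Ioi.mp hu])) hCn ha
    rw [norm_mul, Complex.norm_real, Real.norm_eq_abs, abs_of_pos (by linarith)]
    calc (a/2) * ‖∫ u in Ioi t, g (u-t) * (Real.exp (-(a*u)) : ℂ)‖
        ≤ (a/2) * (C * Real.exp (-(a*t)) / a) := by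
          exact mul_le_mul_of_nonneg_left hb (by linarith)
      _ = C/2 * Real.exp (-(a*t)) := by field_simp
  -- combined limit in a
  have hsum := (tP3.add (tP1.add tP2)).sub tP4
  rw [show gm/2 + (gp/2 + 0) - 0 = (gp+gm)/2 by ring] at hsum
  have htends : Tendsto (fun a : ℝ => ((a/2 : ℝ) : ℂ) * ∫ w in Ioi (0:ℝ),
      g w * ((Real.exp (-(a*|w - t|)) - Real.exp (-(a*(t+w))) : ℝ) : ℂ))
      atTop (nhds ((gp+gm)/2)) := by
    refine Tendsto.congr' ?_ hsum
    filter_upwards [eventually_gt_atTop (0:ℝ)] with a ha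
    rw [final_decomp g hC hgmeas ht ha]
    push_cast
    ring
  -- compose with a = γ/(2ε)
  have hA : Tendsto (fun ε : ℝ => γ/(2*ε)) (nhdsWithin 0 (Ioi 0)) atTop := by
    have h1 : Tendsto (fun ε : ℝ => (γ/2) * ε⁻¹) (nhdsWithin 0 (Ioi 0)) atTop :=
      Tendsto.const_mul_atTop (by positivity) tendsto_inv_nhdsGT_zero
    apply h1.congr
    intro ε
    rw [div_eq_mul_inv, ← div_div, div_eq_mul_inv (γ/2), div_eq_mul_inv]
  have hcomp := htends.comp hA
  refine Tendsto.congr' ?_ hcomp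
  filter_upwards [self_mem_nhdsWithin] with ε hε
  have hε' : 0 < ε := mem_Ioi.mp hε
  set a : ℝ := γ/(2*ε) with hadef
  have ha : 0 < a := by positivity
  show ((a/2 : ℝ) : ℂ) * (∫ w in Ioi (0:ℝ),
      g w * ((Real.exp (-(a*|w - t|)) - Real.exp (-(a*(t+w))) : ℝ) : ℂ))
    = 2 * ∫ s in (0 : ℝ)..t, (Gker γ ε (t - s) : ℂ) *
        (2 * ∫ τ in Ioi (0 : ℝ), g (s + τ) * (Gker γ ε τ : ℂ))
  rw [← key_identity g hC hgmeas ht ha]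
  rw [intervalIntegral.integral_of_le ht.le, ← integral_const_mul]
  apply (setIntegral_congr_fun measurableSet_Ioc ?_).symm
  intro s hs
  dsimp only
  have hinner : (2 : ℂ) * (∫ τ in Ioi (0:ℝ), g (s + τ) * (Gker γ ε τ : ℂ))
      = ∫ τ in Ioi (0:ℝ), g (s + τ) * ((a * Real.exp (-(a*τ)) : ℝ) : ℂ) := by
    rw [← integral_const_mul]
    apply setIntegral_congr_fun measurableSet_Ioi
    intro τ hτ
    dsimp only
    rw [gker_eq hε' (le_of_lt (mem_Ioi.mp hτ)), ← hadef]
    push_cast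
    ring
  rw [mul_comm (2:ℂ), mul_assoc, hinner, gker_eq hε' (by linarith [hs.2] : (0:ℝ) ≤ t - s),
    ← hadef]
  push_cast
  ring
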